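/- For all integers p and q: if p is even then y_{p,q} ▷ a = y_{p+1,−q} and y_{p,q} ▷ b = y_{p−1,−q}; if p is odd then y_{p,q} ▷ a = y_{p−1,−q} and y_{p,q} ▷ b = y_{p+1,−q}. Moreover y_{p,q} ▷ e = y_{p,q} ▷ a and y_{p,q} ▷ f = y_{p,q} ▷ b. -/
import Mathlib


/-- A quandle as in the paper: a set with operations `▷` and `▷⁻¹` satisfying
axioms A1, A2, A3. -/
class PaperQuandle (Q : Type*) where
  rhd : Q → Q → Q
  rhdInv : Q → Q → Q
  fix : ∀ x : Q, rhd x x = x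
  inv_rhd : ∀ x y : Q, rhdInv (rhd x y) y = x
  rhd_inv : ∀ x y : Q, rhd (rhdInv x y) y = x
  self_distrib : ∀ x y z : Q, rhd (rhd x y) z = rhd (rhd x z) (rhd y z)

infixl:65 " ▷ " => PaperQuandle.rhd
infixl:65 " ▷⁻¹ " => PaperQuandle.rhdInv

/-- The point symmetry at `u`, as a permutation of `Q`: `x ↦ x ▷ u`,
with inverse `x ↦ x ▷⁻¹ u`. -/
def ptSym {Q : Type*} [PaperQuandle Q] (u : Q) : Equiv.Perm Q where
  toFun x := x ▷ u
  invFun x := x ▷⁻¹ u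
  left_inv x := PaperQuandle.inv_rhd x u
  right_inv x := PaperQuandle.rhd_inv x u

/-- The element `y_{p,q} = d^{(ab)^t c^q}` if `p = 2t`, and
`d^{(ab)^t a c^q}` if `p = 2t+1`.  Here the word `ab` (apply `a`, then `b`)
is the permutation `ptSym b * ptSym a`. -/
def Y {Q : Type*} [PaperQuandle Q] (a b c d : Q) (p q : ℤ) : Q :=
  if Even p then
    (ptSym c ^ q) (((ptSym b * ptSym a) ^ (p / 2)) d)
  else
    (ptSym c ^ q) ((((ptSym b * ptSym a) ^ ((p - 1) / 2)) d) ▷ a)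


lemma quandle_aux {G : Type*} [Group G] (k : ℤ) (A B C D E F : G)
    (hA : A * A = 1) (hB : B * B = 1) (hE2 : E * E = 1) (hF2 : F * F = 1)
    (hdea : A * E * D = 1) (hbdf : F * D * B = 1)
    (hcke : E * A * (B * A) ^ k * C = 1) :
    (∀ t q : ℤ,
      A * (C ^ q * (B * A) ^ t) = C ^ (-q) * (A * (B * A) ^ t) ∧
      B * (C ^ q * (B * A) ^ t) = C ^ (-q) * (A * (B * A) ^ (t - 1)) ∧
      A * (C ^ q * (A * (B * A) ^ t)) = C ^ (-q) * (B * A) ^ t ∧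
      B * (C ^ q * (A * (B * A) ^ t)) = C ^ (-q) * (B * A) ^ (t + 1) ∧
      D * (C ^ q * (B * A) ^ t) = (C ^ q * (B * A) ^ t) * D ∧
      D * (C ^ q * (A * (B * A) ^ t)) = (C ^ q * (A * (B * A) ^ t)) * D⁻¹) ∧
    E = A * D⁻¹ ∧ F = B * D⁻¹ := by
  have iA : A⁻¹ = A := inv_eq_of_mul_eq_one_right hA
  have iB : B⁻¹ = B := inv_eq_of_mul_eq_one_right hB
  have hE' : E = A * D⁻¹ := by
    have h1 : A * E = D⁻¹ := mul_eq_one_iff_eq_inv.mp hdea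
    calc E = A⁻¹ * (A * E) := by group
      _ = A⁻¹ * D⁻¹ := by rw [h1]
      _ = A * D⁻¹ := by rw [iA]
  have hF' : F = B * D⁻¹ := by
    have h1 : F * D = B⁻¹ := mul_eq_one_iff_eq_inv.mp hbdf
    calc F = (F * D) * D⁻¹ := by group
      _ = B⁻¹ * D⁻¹ := by rw [h1]
      _ = B * D⁻¹ := by rw [iB]
  have hADA : A * D⁻¹ * A = D := by
    have h2 : (A * D⁻¹) * (A * D⁻¹) = 1 := by rw [← hE']; exact hE2
    calc A * D⁻¹ * A = ((A * D⁻¹) * (A * D⁻¹)) * D := by group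
      _ = D := by rw [h2, one_mul]
  have hBDB : B * D⁻¹ * B = D := by
    have h2 : (B * D⁻¹) * (B * D⁻¹) = 1 := by rw [← hF']; exact hF2
    calc B * D⁻¹ * B = ((B * D⁻¹) * (B * D⁻¹)) * D := by group
      _ = D := by rw [h2, one_mul]
  have sAD : A * D * A = D⁻¹ := by
    have h := congrArg Inv.inv hADA
    simpa [mul_inv_rev, iA, mul_assoc] using h
  have sBD : B * D * B = D⁻¹ := by
    have h := congrArg Inv.inv hBDB
    simpa [mul_inv_rev, iB, mul_assoc] using h
  have hAD : A * D = D⁻¹ * A := by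
    calc A * D = (A * D * A) * A⁻¹ := by group
      _ = D⁻¹ * A⁻¹ := by rw [sAD]
      _ = D⁻¹ * A := by rw [iA]
  have hDA : D * A = A * D⁻¹ := by
    calc D * A = A⁻¹ * (A * D * A) := by group
      _ = A⁻¹ * D⁻¹ := by rw [sAD]
      _ = A * D⁻¹ := by rw [iA]
  have hBDi : B * D⁻¹ = D * B := by
    calc B * D⁻¹ = (B * D⁻¹ * B) * B⁻¹ := by group
      _ = D * B⁻¹ := by rw [hBDB]
      _ = D * B := by rw [iB]
  have cPD : Commute (B * A) D := by
    show (B * A) * D = D * (B * A)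
    calc (B * A) * D = B * (A * D) := by group
      _ = B * (D⁻¹ * A) := by rw [hAD]
      _ = (B * D⁻¹) * A := by group
      _ = (D * B) * A := by rw [hBDi]
      _ = D * (B * A) := by group
  have hCval : C = ((B * A) ^ k)⁻¹ * D⁻¹ := by
    have h4 : D * ((B * A) ^ k * C) = 1 := by
      have h := hcke
      rw [hE'] at h
      calc D * ((B * A) ^ k * C) = (A * D⁻¹ * A) * ((B * A) ^ k * C) := by rw [hADA]
        _ = (A * D⁻¹) * A * (B * A) ^ k * C := by group
        _ = 1 := h
    calc C = ((B * A) ^ k)⁻¹ * (D⁻¹ * (D * ((B * A) ^ k * C))) := by group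
      _ = ((B * A) ^ k)⁻¹ * (D⁻¹ * 1) := by rw [h4]
      _ = ((B * A) ^ k)⁻¹ * D⁻¹ := by rw [mul_one]
  have cCD : Commute C D := by
    rw [hCval]
    exact ((cPD.zpow_left k).inv_left).mul_left (Commute.refl D).inv_left
  -- conjugation of powers of (B*A)
  have sAP : A * (B * A) * A = (B * A)⁻¹ := by
    have h : (B * A)⁻¹ = A * B := by rw [mul_inv_rev, iA, iB]
    rw [h]
    calc A * (B * A) * A = (A * B) * (A * A) := by group
      _ = (A * B) * 1 := by rw [hA]
      _ = A * B := by rw [mul_one]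
  have sBP : B * (B * A) * B = (B * A)⁻¹ := by
    have h : (B * A)⁻¹ = A * B := by rw [mul_inv_rev, iA, iB]
    rw [h]
    calc B * (B * A) * B = (B * B) * (A * B) := by group
      _ = 1 * (A * B) := by rw [hB]
      _ = A * B := by rw [one_mul]
  have sAPk : ∀ j : ℤ, A * (B * A) ^ j * A = ((B * A) ^ j)⁻¹ := by
    intro j
    calc A * (B * A) ^ j * A = A * (B * A) ^ j * A⁻¹ := by rw [iA]
      _ = (A * (B * A) * A⁻¹) ^ j := (conj_zpow ..).symm
      _ = (A * (B * A) * A) ^ j := by rw [iA]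
      _ = ((B * A)⁻¹) ^ j := by rw [sAP]
      _ = ((B * A) ^ j)⁻¹ := by rw [inv_zpow]
  have sBPk : ∀ j : ℤ, B * (B * A) ^ j * B = ((B * A) ^ j)⁻¹ := by
    intro j
    calc B * (B * A) ^ j * B = B * (B * A) ^ j * B⁻¹ := by rw [iB]
      _ = (B * (B * A) * B⁻¹) ^ j := (conj_zpow ..).symm
      _ = (B * (B * A) * B) ^ j := by rw [iB]
      _ = ((B * A)⁻¹) ^ j := by rw [sBP]
      _ = ((B * A) ^ j)⁻¹ := by rw [inv_zpow]
  have sAC : A * C * A = C⁻¹ := by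
    have hCinv : C⁻¹ = D * (B * A) ^ k := by rw [hCval]; group
    rw [hCinv, hCval]
    calc A * (((B * A) ^ k)⁻¹ * D⁻¹) * A
        = (A * ((B * A) ^ k)⁻¹ * A⁻¹) * (A * D⁻¹ * A) := by group
      _ = (A * ((B * A) ^ k)⁻¹ * A) * D := by rw [iA, hADA]
      _ = (A * ((B * A) ^ k) * A)⁻¹ * D := by rw [mul_inv_rev, mul_inv_rev, iA]; group
      _ = (((B * A) ^ k)⁻¹)⁻¹ * D := by rw [sAPk k]
      _ = (B * A) ^ k * D := by rw [inv_inv]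
      _ = D * (B * A) ^ k := (cPD.zpow_left k).eq
  have sBC : B * C * B = C⁻¹ := by
    have hCinv : C⁻¹ = D * (B * A) ^ k := by rw [hCval]; group
    rw [hCinv, hCval]
    calc B * (((B * A) ^ k)⁻¹ * D⁻¹) * B
        = (B * ((B * A) ^ k)⁻¹ * B⁻¹) * (B * D⁻¹ * B) := by group
      _ = (B * ((B * A) ^ k)⁻¹ * B) * D := by rw [iB, hBDB]
      _ = (B * ((B * A) ^ k) * B)⁻¹ * D := by rw [mul_inv_rev, mul_inv_rev, iB]; group
      _ = (((B * A) ^ k)⁻¹)⁻¹ * D := by rw [sBPk k]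
      _ = (B * A) ^ k * D := by rw [inv_inv]
      _ = D * (B * A) ^ k := (cPD.zpow_left k).eq
  have sACq : ∀ q : ℤ, A * C ^ q * A = C ^ (-q) := by
    intro q
    calc A * C ^ q * A = A * C ^ q * A⁻¹ := by rw [iA]
      _ = (A * C * A⁻¹) ^ q := (conj_zpow ..).symm
      _ = (A * C * A) ^ q := by rw [iA]
      _ = (C⁻¹) ^ q := by rw [sAC]
      _ = C ^ (-q) := by rw [inv_zpow, ← zpow_neg]
  have sBCq : ∀ q : ℤ, B * C ^ q * B = C ^ (-q) := by
    intro q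
    calc B * C ^ q * B = B * C ^ q * B⁻¹ := by rw [iB]
      _ = (B * C * B⁻¹) ^ q := (conj_zpow ..).symm
      _ = (B * C * B) ^ q := by rw [iB]
      _ = (C⁻¹) ^ q := by rw [sBC]
      _ = C ^ (-q) := by rw [inv_zpow, ← zpow_neg]
  refine ⟨fun t q => ?_, hE', hF'⟩
  have hACq : ∀ q : ℤ, A * C ^ q = C ^ (-q) * A := by
    intro q
    calc A * C ^ q = (A * C ^ q * A) * A⁻¹ := by group
      _ = C ^ (-q) * A⁻¹ := by rw [sACq]
      _ = C ^ (-q) * A := by rw [iA]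
  have hBCq : ∀ q : ℤ, B * C ^ q = C ^ (-q) * B := by
    intro q
    calc B * C ^ q = (B * C ^ q * B) * B⁻¹ := by group
      _ = C ^ (-q) * B⁻¹ := by rw [sBCq]
      _ = C ^ (-q) * B := by rw [iB]
  refine ⟨?_, ?_, ?_, ?_, ?_, ?_⟩
  · calc A * (C ^ q * (B * A) ^ t) = (A * C ^ q) * (B * A) ^ t := by group
      _ = (C ^ (-q) * A) * (B * A) ^ t := by rw [hACq]
      _ = C ^ (-q) * (A * (B * A) ^ t) := by group
  · have hBP : B * (B * A) ^ t = A * (B * A) ^ (t - 1) := by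
      have key : (B * A) ^ (t - 1) = (B * A)⁻¹ * (B * A) ^ t := by
        rw [show t - 1 = -1 + t by ring, zpow_add, zpow_neg_one]
      rw [key]
      calc B * (B * A) ^ t = (A * A) * (B * (B * A) ^ t) := by rw [hA, one_mul]
        _ = A * ((A * B) * (B * A) ^ t) := by group
        _ = A * ((B * A)⁻¹ * (B * A) ^ t) := by rw [mul_inv_rev, iA, iB]
    calc B * (C ^ q * (B * A) ^ t) = (B * C ^ q) * (B * A) ^ t := by group
      _ = (C ^ (-q) * B) * (B * A) ^ t := by rw [hBCq]
      _ = C ^ (-q) * (B * (B * A) ^ t) := by group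
      _ = C ^ (-q) * (A * (B * A) ^ (t - 1)) := by rw [hBP]
  · calc A * (C ^ q * (A * (B * A) ^ t)) = (A * C ^ q * A) * (B * A) ^ t := by group
      _ = C ^ (-q) * (B * A) ^ t := by rw [sACq]
  · calc B * (C ^ q * (A * (B * A) ^ t)) = (B * C ^ q) * (A * (B * A) ^ t) := by group
      _ = (C ^ (-q) * B) * (A * (B * A) ^ t) := by rw [hBCq]
      _ = C ^ (-q) * ((B * A) * (B * A) ^ t) := by
          rw [mul_assoc, ← mul_assoc B]
      _ = C ^ (-q) * (B * A) ^ (t + 1) := by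
          rw [show (t:ℤ) + 1 = 1 + t by ring, zpow_add, zpow_one]
  · exact (((cCD.symm).zpow_right q).mul_right ((cPD.symm).zpow_right t)).eq
  · calc D * (C ^ q * (A * (B * A) ^ t)) = (D * C ^ q) * (A * (B * A) ^ t) := by group
      _ = (C ^ q * D) * (A * (B * A) ^ t) := by rw [((cCD.symm).zpow_right q).eq]
      _ = C ^ q * ((D * A) * (B * A) ^ t) := by group
      _ = C ^ q * ((A * D⁻¹) * (B * A) ^ t) := by rw [hDA]
      _ = C ^ q * (A * (D⁻¹ * (B * A) ^ t)) := by group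
      _ = C ^ q * (A * ((B * A) ^ t * D⁻¹)) := by
          rw [(((cPD.symm).inv_left).zpow_right t).eq]
      _ = (C ^ q * (A * (B * A) ^ t)) * D⁻¹ := by group

theorem stmt_18
    {Q : Type*} [PaperQuandle Q] (k : ℤ) (m n : ℕ) (a b c d e f : Q)
    (hk : 1 ≤ k) (hm : 0 < m) (hn : 0 < n)
    (rel_a : ∀ x : Q, x ▷ a ▷ a = x)
    (rel_b : ∀ x : Q, x ▷ b ▷ b = x)
    (rel_e : ∀ x : Q, x ▷ e ▷ e = x)
    (rel_f : ∀ x : Q, x ▷ f ▷ f = x)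
    (rel_c : ∀ x : Q, (ptSym c ^ m) x = x)
    (rel_d : ∀ x : Q, (ptSym d ^ n) x = x)
    (rel_dea : ∀ x : Q, x ▷ d ▷ e ▷ a = x)
    (rel_bdf : ∀ x : Q, x ▷ b ▷ d ▷ f = x)
    (rel_cke : ∀ x : Q, (((ptSym b * ptSym a) ^ k) (x ▷ c)) ▷ a ▷ e = x)
    (rel_fca : ∀ x : Q, (((ptSym b * ptSym a) ^ (k - 1)) (x ▷ f ▷ c)) ▷ a = x) :
    ∀ p q : ℤ,
      (Even p → Y a b c d p q ▷ a = Y a b c d (p + 1) (-q) ∧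
        Y a b c d p q ▷ b = Y a b c d (p - 1) (-q)) ∧
      (Odd p → Y a b c d p q ▷ a = Y a b c d (p - 1) (-q) ∧
        Y a b c d p q ▷ b = Y a b c d (p + 1) (-q)) ∧
      Y a b c d p q ▷ e = Y a b c d p q ▷ a ∧
      Y a b c d p q ▷ f = Y a b c d p q ▷ b := by
  intro p q
  have hA : ptSym a * ptSym a = 1 := Equiv.ext rel_a
  have hB : ptSym b * ptSym b = 1 := Equiv.ext rel_b
  have hE2 : ptSym e * ptSym e = 1 := Equiv.ext rel_e
  have hF2 : ptSym f * ptSym f = 1 := Equiv.ext rel_f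
  have hdea : ptSym a * ptSym e * ptSym d = 1 := Equiv.ext rel_dea
  have hbdf : ptSym f * ptSym d * ptSym b = 1 := Equiv.ext rel_bdf
  have hcke : ptSym e * ptSym a * (ptSym b * ptSym a) ^ k * ptSym c = 1 :=
    Equiv.ext rel_cke
  obtain ⟨main, hE', hF'⟩ := quandle_aux k (ptSym a) (ptSym b) (ptSym c) (ptSym d)
    (ptSym e) (ptSym f) hA hB hE2 hF2 hdea hbdf hcke
  have hDd : ptSym d d = d := PaperQuandle.fix d
  have hDid : (ptSym d)⁻¹ d = d := by
    rw [Equiv.Perm.inv_def, Equiv.symm_apply_eq]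
    exact hDd.symm
  have fixEven : ∀ t q : ℤ,
      (ptSym d)⁻¹ ((ptSym c ^ q) (((ptSym b * ptSym a) ^ t) d)) =
        (ptSym c ^ q) (((ptSym b * ptSym a) ^ t) d) := by
    intro t q
    have h := DFunLike.congr_fun ((main t q).2.2.2.2.1) d
    simp only [Equiv.Perm.mul_apply] at h
    rw [hDd] at h
    rw [Equiv.Perm.inv_def, Equiv.symm_apply_eq]
    exact h.symm
  have fixOdd : ∀ t q : ℤ,
      (ptSym d)⁻¹ ((ptSym c ^ q) ((ptSym a) (((ptSym b * ptSym a) ^ t) d))) =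
        (ptSym c ^ q) ((ptSym a) (((ptSym b * ptSym a) ^ t) d)) := by
    intro t q
    have h := DFunLike.congr_fun ((main t q).2.2.2.2.2) d
    simp only [Equiv.Perm.mul_apply] at h
    rw [hDid] at h
    rw [Equiv.Perm.inv_def, Equiv.symm_apply_eq]
    exact h.symm
  have epart : ∀ y : Q, (ptSym d)⁻¹ y = y → y ▷ e = y ▷ a := by
    intro y hy
    show ptSym e y = ptSym a y
    rw [hE', Equiv.Perm.mul_apply, hy]
  have fpart : ∀ y : Q, (ptSym d)⁻¹ y = y → y ▷ f = y ▷ b := by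
    intro y hy
    show ptSym f y = ptSym b y
    rw [hF', Equiv.Perm.mul_apply, hy]
  refine ⟨?_, ?_, ?_, ?_⟩
  · rintro ⟨t, rfl⟩
    have hEv : Even (t + t) := ⟨t, rfl⟩
    have hOd1 : ¬ Even (t + t + 1) := by rw [Int.even_iff]; omega
    have hOd2 : ¬ Even (t + t - 1) := by rw [Int.even_iff]; omega
    have d1 : (t + t) / 2 = t := by omega
    have d2 : (t + t + 1 - 1) / 2 = t := by omega
    have d3 : (t + t - 1 - 1) / 2 = t - 1 := by omega
    constructor
    · unfold Y
      rw [if_pos hEv, if_neg hOd1, d1, d2]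
      have h := DFunLike.congr_fun ((main t q).1) d
      simp only [Equiv.Perm.mul_apply] at h
      exact h
    · unfold Y
      rw [if_pos hEv, if_neg hOd2, d1, d3]
      have h := DFunLike.congr_fun ((main t q).2.1) d
      simp only [Equiv.Perm.mul_apply] at h
      exact h
  · rintro ⟨t, rfl⟩
    have hOd : ¬ Even (2 * t + 1) := by rw [Int.even_iff]; omega
    have hEv1 : Even (2 * t + 1 + 1) := by rw [Int.even_iff]; omega
    have hEv2 : Even (2 * t + 1 - 1) := by rw [Int.even_iff]; omega
    have d1 : (2 * t + 1 - 1) / 2 = t := by omega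
    have d2 : (2 * t + 1 + 1) / 2 = t + 1 := by omega
    constructor
    · unfold Y
      rw [if_neg hOd, if_pos hEv2, d1]
      have h := DFunLike.congr_fun ((main t q).2.2.1) d
      simp only [Equiv.Perm.mul_apply] at h
      exact h
    · unfold Y
      rw [if_neg hOd, if_pos hEv1, d1, d2]
      have h := DFunLike.congr_fun ((main t q).2.2.2.1) d
      simp only [Equiv.Perm.mul_apply] at h
      exact h
  · rcases Int.even_or_odd p with ⟨t, rfl⟩ | ⟨t, rfl⟩
    · have hEv : Even (t + t) := ⟨t, rfl⟩
      have d1 : (t + t) / 2 = t := by omega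
      unfold Y
      rw [if_pos hEv, d1]
      exact epart _ (fixEven t q)
    · have hOd : ¬ Even (2 * t + 1) := by rw [Int.even_iff]; omega
      have d1 : (2 * t + 1 - 1) / 2 = t := by omega
      unfold Y
      rw [if_neg hOd, d1]
      exact epart _ (fixOdd t q)
  · rcases Int.even_or_odd p with ⟨t, rfl⟩ | ⟨t, rfl⟩
    · have hEv : Even (t + t) := ⟨t, rfl⟩
      have d1 : (t + t) / 2 = t := by omega
      unfold Y
      rw [if_pos hEv, d1]
      exact fpart _ (fixEven t q)
    · have hOd : ¬ Even (2 * t + 1) := by rw [Int.even_iff]; omega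
      have d1 : (2 * t + 1 - 1) / 2 = t := by omega
      unfold Y
      rw [if_neg hOd, d1]
      exact fpart _ (fixOdd t q)
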